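/- arXiv:1402.5486 — 2 statements merged into one kernel-verified Lean document; each statement's English description precedes it below -/
import Mathlib

section
/- Let λ > 0, let (T_i)_{i≥1} be i.i.d. exponential random variables with rate λ, let S_k = T_1 + ... + T_k, and let X be an exponential random variable with rate λ independent of the sequence (T_i). Then for every k ≥ 1, the conditional probability P(S_k < X < S_{k+1} | S_1 < X) = 2^{-k}; that is, conditioned on at least one reception, the number of receptions of the same packet is geometrically distributed with parameter 1/2. -/
open MeasureTheory ProbabilityTheory Real Filter Topology
open scoped ENNReal

section Aux
open Set

lemma my_integrableOn_exp (c : ℝ) {b : ℝ} (hb : 0 < b) :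
    IntegrableOn (fun x => Real.exp (-(b * x))) (Set.Ioi c) := by
  simpa [neg_mul] using exp_neg_integrableOn_Ioi c hb

lemma my_integral_exp {b : ℝ} (hb : 0 < b) (c : ℝ) :
    ∫ x in Set.Ioi c, Real.exp (-(b * x)) = Real.exp (-(b * c)) / b := by
  have hderiv : ∀ x ∈ Set.Ici c, HasDerivAt (fun x => -(Real.exp (-(b * x)) / b))
      (Real.exp (-(b * x))) x := by
    intro x _
    have h1 : HasDerivAt (fun x : ℝ => -(b * x)) (-b) x := by
      simpa using ((hasDerivAt_id x).const_mul b).fun_neg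
    have h2 := (h1.exp.div_const b).fun_neg
    convert h2 using 1
    · rfl
    · rfl
    field_simp
  have htend : Tendsto (fun x => -(Real.exp (-(b * x)) / b)) atTop (nhds 0) := by
    have h3 : Tendsto (fun x : ℝ => -(b * x)) atTop atBot := by
      apply tendsto_neg_atBot_iff.mpr
      exact Tendsto.const_mul_atTop hb tendsto_id
    have := (Real.tendsto_exp_atBot.comp h3).div_const b
    simpa using this.neg
  have := integral_Ioi_of_hasDerivAt_of_tendsto' hderiv (my_integrableOn_exp c hb) htend
  rw [this]; ring

lemma my_expMeasure_eq (r : ℝ) :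
    expMeasure r = volume.withDensity (exponentialPDF r) := rfl

lemma my_expMeasure_Ioi {r : ℝ} (hr : 0 < r) {s : ℝ} (hs : 0 ≤ s) :
    expMeasure r (Set.Ioi s) = ENNReal.ofReal (Real.exp (-(r * s))) := by
  rw [my_expMeasure_eq, withDensity_apply _ measurableSet_Ioi]
  have h1 : ∀ x ∈ Set.Ioi s, exponentialPDF r x = ENNReal.ofReal (r * Real.exp (-(r * x))) :=
    fun x hx => exponentialPDF_of_nonneg (hs.trans (le_of_lt hx))
  rw [setLIntegral_congr_fun measurableSet_Ioi h1,
    ← ofReal_integral_eq_lintegral_ofReal ((my_integrableOn_exp s hr).const_mul r)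
      (ae_of_all _ fun x => mul_nonneg hr.le (Real.exp_pos _).le)]
  rw [integral_const_mul, my_integral_exp hr s]
  congr 1
  field_simp

lemma my_expMeasure_singleton {r : ℝ} (s : ℝ) : expMeasure r {s} = 0 := by
  rw [my_expMeasure_eq, withDensity_apply _ (measurableSet_singleton s)]
  rw [Measure.restrict_eq_zero.mpr (volume_singleton), lintegral_zero_measure]

lemma my_expMeasure_Ici {r : ℝ} (hr : 0 < r) {s : ℝ} (hs : 0 ≤ s) :
    expMeasure r (Set.Ici s) = ENNReal.ofReal (Real.exp (-(r * s))) := by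
  have : Set.Ici s = {s} ∪ Set.Ioi s := by
    ext x; simp [le_iff_lt_or_eq, or_comm, eq_comm]
  rw [this]
  have hae : ({s} ∪ Set.Ioi s : Set ℝ) =ᵐ[expMeasure r] Set.Ioi s := by
    have h0 : ∀ᵐ x ∂(expMeasure r), x ∉ ({s} : Set ℝ) :=
      (measure_eq_zero_iff_ae_notMem).mp (my_expMeasure_singleton s)
    filter_upwards [h0] with x hx
    simp only [Set.mem_union, Set.mem_singleton_iff, eq_iff_iff]
    exact ⟨fun h => h.resolve_left hx, Or.inr⟩
  rw [measure_congr hae, my_expMeasure_Ioi hr hs]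

lemma my_expMeasure_Iic_zero {r : ℝ} : expMeasure r (Set.Iic 0) = 0 := by
  have h : Set.Iic (0:ℝ) = Set.Iio 0 ∪ {0} := by
    ext x; simp [le_iff_lt_or_eq]
  rw [h]
  have hae : (Set.Iio 0 ∪ {0} : Set ℝ) =ᵐ[expMeasure r] Set.Iio 0 := by
    have h0 : ∀ᵐ x ∂(expMeasure r), x ∉ ({0} : Set ℝ) :=
      (measure_eq_zero_iff_ae_notMem).mp (my_expMeasure_singleton 0)
    filter_upwards [h0] with x hx
    simp only [Set.mem_union, Set.mem_singleton_iff, eq_iff_iff]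
    exact ⟨fun hh => hh.resolve_right hx, Or.inl⟩
  rw [measure_congr hae, my_expMeasure_eq, withDensity_apply _ measurableSet_Iio]
  rw [setLIntegral_congr_fun measurableSet_Iio
    (fun x (hx : x < 0) => exponentialPDF_of_neg hx)]
  simp

lemma my_lintegral_exp {r : ℝ} (hr : 0 < r) :
    ∫⁻ x, ENNReal.ofReal (Real.exp (-(r * x))) ∂(expMeasure r) = ENNReal.ofReal (1/2) := by
  have hm : Measurable fun x : ℝ => ENNReal.ofReal (Real.exp (-(r * x))) :=
    ENNReal.measurable_ofReal.comp (Real.measurable_exp.comp (measurable_const_mul r).neg)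
  have hpdf : Measurable (exponentialPDF r) :=
    ENNReal.measurable_ofReal.comp (measurable_exponentialPDFReal r)
  rw [my_expMeasure_eq, lintegral_withDensity_eq_lintegral_mul _ hpdf hm]
  rw [← lintegral_add_compl (fun x => (exponentialPDF r * fun x => ENNReal.ofReal (Real.exp (-(r * x)))) x) (measurableSet_Iio (a := (0:ℝ)))]
  have h1 : ∫⁻ x in Set.Iio 0, (exponentialPDF r * fun x => ENNReal.ofReal (Real.exp (-(r * x)))) x = 0 := by
    have hz : ∀ x ∈ Set.Iio (0:ℝ),
        ((exponentialPDF r * fun x => ENNReal.ofReal (Real.exp (-(r * x)))) x) = (0:ℝ≥0∞) :=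
      fun x hx => by simp [exponentialPDF_of_neg hx]
    rw [setLIntegral_congr_fun measurableSet_Iio hz]
    simp
  have h2 : ∫⁻ x in (Set.Iio 0)ᶜ, (exponentialPDF r * fun x => ENNReal.ofReal (Real.exp (-(r * x)))) x = ENNReal.ofReal (1/2) := by
    rw [compl_Iio]
    have hc : ∀ x ∈ Set.Ici (0:ℝ), (exponentialPDF r * fun x => ENNReal.ofReal (Real.exp (-(r * x)))) x
        = ENNReal.ofReal (r * Real.exp (-(2 * r * x))) := by
      intro x hx
      simp only [Pi.mul_apply, exponentialPDF_of_nonneg hx]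
      rw [← ENNReal.ofReal_mul (by positivity)]
      congr 1
      rw [mul_assoc, ← Real.exp_add]
      ring_nf
    rw [setLIntegral_congr_fun measurableSet_Ici hc]
    have hae2 : (Set.Ici 0 : Set ℝ) =ᵐ[volume] Set.Ioi 0 := Ioi_ae_eq_Ici.symm
    rw [setLIntegral_congr hae2,
      ← ofReal_integral_eq_lintegral_ofReal ((my_integrableOn_exp 0 (by positivity : (0:ℝ) < 2*r)).const_mul r)
        (ae_of_all _ fun x => mul_nonneg hr.le (Real.exp_pos _).le),
      integral_const_mul, my_integral_exp (by positivity : (0:ℝ) < 2*r) 0]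
    congr 1
    rw [mul_zero, neg_zero, Real.exp_zero]
    field_simp
  rw [h1, h2, zero_add]

end Aux
section Aux2
open Set

lemma my_iIndepFun_ae {Ω : Type*} [MeasurableSpace Ω] {μ : Measure Ω} {ι : Type*} [Countable ι]
    {f g : ι → Ω → ℝ} (hf : iIndepFun (m := fun _ => Real.measurableSpace) f μ)
    (hfg : ∀ i, f i =ᵐ[μ] g i) : iIndepFun (m := fun _ => Real.measurableSpace) g μ := by
  rw [iIndepFun_iff_measure_inter_preimage_eq_mul] at hf ⊢
  intro S sets hsets
  have hae : ∀ᵐ ω ∂μ, ∀ i, f i ω = g i ω := ae_all_iff.2 hfg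
  have h1 : (⋂ i ∈ S, g i ⁻¹' sets i) =ᵐ[μ] (⋂ i ∈ S, f i ⁻¹' sets i) := by
    apply eventuallyEq_set.2
    filter_upwards [hae] with ω hω
    simp only [Set.mem_iInter, Set.mem_preimage]
    constructor <;> intro h i hi
    · rw [hω i]; exact h i hi
    · rw [← hω i]; exact h i hi
  rw [measure_congr h1, hf S hsets]
  refine Finset.prod_congr rfl fun i _ => measure_congr ?_
  apply eventuallyEq_set.2
  filter_upwards [hae] with ω hω
  simp [Set.mem_preimage, hω i]

end Aux2

/-- Let `λ > 0`, let `(T_i)` be i.i.d. exponential random variables with rate `λ`,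
let `S_k = T_1 + ... + T_k` (here `S k = ∑ i ∈ Finset.range k, T i`), and let `X` be an
exponential random variable with rate `λ`, independent of the sequence `(T_i)`.
Then for every `k ≥ 1`, the conditional probability
`P(S_k < X < S_{k+1} | S_1 < X) = 2^{-k}`: conditioned on at least one reception, the number
of receptions of the same packet is geometrically distributed with parameter `1/2`. -/
theorem cond_prob_erlang_lt_exponential_lt_erlang_succ
    {Ω : Type*} [MeasureSpace Ω] [IsProbabilityMeasure (ℙ : Measure Ω)]
    (lam : ℝ) (hlam : 0 < lam) (T : ℕ → Ω → ℝ) (X : Ω → ℝ)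
    (hT : ∀ i, Measure.map (T i) ℙ = ProbabilityTheory.expMeasure lam)
    (hX : Measure.map X ℙ = ProbabilityTheory.expMeasure lam)
    (hindep : iIndepFun (m := fun _ : Option ℕ => Real.measurableSpace)
      (fun o : Option ℕ => o.elim X T) ℙ)
    (k : ℕ) (hk : 1 ≤ k) :
    ProbabilityTheory.cond ℙ {ω | ∑ i ∈ Finset.range 1, T i ω < X ω}
        {ω | ∑ i ∈ Finset.range k, T i ω < X ω ∧ X ω < ∑ i ∈ Finset.range (k + 1), T i ω}
      = (1 / 2 : ℝ≥0∞) ^ k := by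
  have hPexp : IsProbabilityMeasure (expMeasure lam) := isProbabilityMeasure_expMeasure hlam
  -- a.e.-measurability
  have hXm : AEMeasurable X ℙ := by
    by_contra h
    rw [Measure.map_of_not_aemeasurable h] at hX
    have h1 := hPexp.measure_univ
    rw [← hX] at h1
    simp at h1
  have hTm : ∀ i, AEMeasurable (T i) ℙ := by
    intro i
    by_contra h
    have hTi := hT i
    rw [Measure.map_of_not_aemeasurable h] at hTi
    have h1 := hPexp.measure_univ
    rw [← hTi] at h1
    simp at h1
  -- measurable modifications
  set X' : Ω → ℝ := hXm.mk X with hX'def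
  set T' : ℕ → Ω → ℝ := fun i => (hTm i).mk (T i) with hT'def
  have hX'm : Measurable X' := hXm.measurable_mk
  have hT'm : ∀ i, Measurable (T' i) := fun i => (hTm i).measurable_mk
  have hXe : X =ᵐ[ℙ] X' := hXm.ae_eq_mk
  have hTe : ∀ i, T i =ᵐ[ℙ] T' i := fun i => (hTm i).ae_eq_mk
  have hX' : Measure.map X' ℙ = expMeasure lam := by
    rw [← Measure.map_congr hXe]; exact hX
  have hT' : ∀ i, Measure.map (T' i) ℙ = expMeasure lam := fun i => by
    rw [← Measure.map_congr (hTe i)]; exact hT i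
  set f' : Option ℕ → Ω → ℝ := fun o => o.elim X' T' with hf'def
  have hf'm : ∀ o, Measurable (f' o) := by
    rintro (_ | i)
    · exact hX'm
    · exact hT'm i
  have hindep' : iIndepFun (m := fun _ : Option ℕ => Real.measurableSpace) f' ℙ := by
    apply my_iIndepFun_ae hindep
    rintro (_ | i)
    · exact hXe
    · exact hTe i
  -- partial sums
  set S : ℕ → Ω → ℝ := fun n ω => ∑ i ∈ Finset.range n, T' i ω with hSdef
  have hSm : ∀ n, Measurable (S n) := fun n => Finset.measurable_sum _ fun i _ => hT'm i
  have hsum_eq : ∀ n : ℕ, (∑ j ∈ (Finset.range n).map ⟨some, Option.some_injective ℕ⟩, f' j) = S n := by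
    intro n
    funext ω
    rw [Finset.sum_apply]
    rw [Finset.sum_map]
    rfl
  have hindS : ∀ n, IndepFun (S n) X' ℙ := by
    intro n
    have h := hindep'.indepFun_finsetSum_of_notMem hf'm
      (s := (Finset.range n).map ⟨some, Option.some_injective ℕ⟩) (i := none) (by simp)
    rwa [hsum_eq n] at h
  have hindT : ∀ n, IndepFun (S n) (T' n) ℙ := by
    intro n
    have h := hindep'.indepFun_finsetSum_of_notMem hf'm
      (s := (Finset.range n).map ⟨some, Option.some_injective ℕ⟩) (i := some n) (by simp)
    rwa [hsum_eq n] at h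
  -- positivity a.e.
  have hpos : ∀ᵐ ω ∂ℙ, ∀ i, 0 < T' i ω := by
    rw [ae_all_iff]
    intro i
    rw [ae_iff]
    have hset : {ω | ¬ 0 < T' i ω} = (T' i) ⁻¹' (Set.Iic 0) := by
      ext ω; simp [not_lt]
    rw [hset, ← Measure.map_apply (hT'm i) measurableSet_Iic, hT' i]
    exact my_expMeasure_Iic_zero
  have hSnn : ∀ n, ∀ᵐ ω ∂ℙ, 0 ≤ S n ω := by
    intro n
    filter_upwards [hpos] with ω hω
    exact Finset.sum_nonneg fun i _ => (hω i).le
  -- the key lintegral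
  set φ : ℝ → ℝ≥0∞ := fun x => ENNReal.ofReal (Real.exp (-(lam * x))) with hφdef
  have hφm : Measurable φ :=
    ENNReal.measurable_ofReal.comp (Real.measurable_exp.comp (measurable_const_mul lam).neg)
  have hTint : ∀ n, ∫⁻ ω, φ (T' n ω) ∂ℙ = ENNReal.ofReal (1/2) := by
    intro n
    rw [← lintegral_map hφm (hT'm n), hT' n]
    exact my_lintegral_exp hlam
  have hJ : ∀ n, ∫⁻ ω, φ (S n ω) ∂ℙ = (1/2 : ℝ≥0∞) ^ n := by
    intro n
    induction n with
    | zero => simp [hφdef, hSdef]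
    | succ n ih =>
      have hsplit : ∀ ω, φ (S (n+1) ω) = φ (S n ω) * φ (T' n ω) := by
        intro ω
        rw [hφdef]
        simp only
        rw [← ENNReal.ofReal_mul (Real.exp_pos _).le, ← Real.exp_add]
        congr 2
        rw [hSdef]
        simp only
        rw [Finset.sum_range_succ]
        ring
      simp_rw [hsplit]
      have hmul : ∫⁻ ω, φ (S n ω) * φ (T' n ω) ∂ℙ
          = (∫⁻ ω, φ (S n ω) ∂ℙ) * ∫⁻ ω, φ (T' n ω) ∂ℙ :=
        lintegral_mul_eq_lintegral_mul_lintegral_of_indepFun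
          (hφm.comp (hSm n)) (hφm.comp (hT'm n)) ((hindT n).comp hφm hφm)
      rw [hmul, ih, hTint n, pow_succ]
      congr 1
      rw [ENNReal.ofReal_div_of_pos (by norm_num), ENNReal.ofReal_one, ENNReal.ofReal_ofNat]
  -- probabilities
  have hProb : ∀ n, ℙ {ω | S n ω < X' ω} = (1/2 : ℝ≥0∞) ^ n ∧
      ℙ {ω | S n ω ≤ X' ω} = (1/2 : ℝ≥0∞) ^ n := by
    intro n
    have hmap : Measure.map (fun ω => (S n ω, X' ω)) ℙ
        = (Measure.map (S n) ℙ).prod (expMeasure lam) := by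
      rw [← hX']
      exact (indepFun_iff_map_prod_eq_prod_map_map (hSm n).aemeasurable hX'm.aemeasurable).1
        (hindS n)
    have key : ∀ (I : ℝ → Set ℝ), MeasurableSet {p : ℝ × ℝ | p.2 ∈ I p.1} →
        (∀ s : ℝ, Prod.mk s ⁻¹' {p : ℝ × ℝ | p.2 ∈ I p.1} = I s) →
        (Measurable fun s => expMeasure lam (I s)) →
        (∀ s : ℝ, 0 ≤ s → expMeasure lam (I s) = ENNReal.ofReal (Real.exp (-(lam * s)))) →
        ℙ {ω | X' ω ∈ I (S n ω)} = (1/2 : ℝ≥0∞) ^ n := by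
      intro I hIm hIpre hIμm hIval
      have h1 : {ω | X' ω ∈ I (S n ω)} = (fun ω => (S n ω, X' ω)) ⁻¹' {p : ℝ × ℝ | p.2 ∈ I p.1} := rfl
      rw [h1, ← Measure.map_apply ((hSm n).prodMk hX'm) hIm, hmap,
        Measure.prod_apply hIm]
      have h2 : ∫⁻ s, expMeasure lam (Prod.mk s ⁻¹' {p : ℝ × ℝ | p.2 ∈ I p.1}) ∂(Measure.map (S n) ℙ)
          = ∫⁻ ω, expMeasure lam (I (S n ω)) ∂ℙ := by
        rw [lintegral_congr fun s => by rw [hIpre s]]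
        exact lintegral_map hIμm (hSm n)
      rw [h2]
      rw [lintegral_congr_ae (g := fun ω => φ (S n ω)) ?_, hJ n]
      filter_upwards [hSnn n] with ω hω
      rw [hIval _ hω]
    constructor
    · exact key (fun s => Set.Ioi s) (measurableSet_lt measurable_fst measurable_snd)
        (fun s => rfl)
        (Antitone.measurable fun s t hst => measure_mono (Set.Ioi_subset_Ioi hst))
        (fun s hs => my_expMeasure_Ioi hlam hs)
    · exact key (fun s => Set.Ici s) (measurableSet_le measurable_fst measurable_snd)
        (fun s => rfl)
        (Antitone.measurable fun s t hst => measure_mono (Set.Ici_subset_Ici.mpr hst))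
        (fun s hs => my_expMeasure_Ici hlam hs)
  -- final assembly
  set A : Set Ω := {ω | ∑ i ∈ Finset.range 1, T i ω < X ω} with hAdef
  set B : Set Ω := {ω | ∑ i ∈ Finset.range k, T i ω < X ω ∧
    X ω < ∑ i ∈ Finset.range (k + 1), T i ω} with hBdef
  set A' : Set Ω := {ω | S 1 ω < X' ω} with hA'def
  set B' : Set Ω := {ω | S k ω < X' ω ∧ X' ω < S (k+1) ω} with hB'def
  have hA'meas : MeasurableSet A' := measurableSet_lt (hSm 1) hX'm
  have hTae : ∀ᵐ ω ∂ℙ, ∀ i, T i ω = T' i ω := ae_all_iff.2 hTe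
  have hAae : A =ᵐ[ℙ] A' := by
    apply eventuallyEq_set.2
    filter_upwards [hXe, hTae] with ω h1 h2
    have hs : ∀ m : ℕ, ∑ i ∈ Finset.range m, T i ω = S m ω := fun m =>
      Finset.sum_congr rfl fun i _ => h2 i
    simp only [hAdef, hA'def, Set.mem_setOf_eq, hs, h1]
  have hBae : B =ᵐ[ℙ] B' := by
    apply eventuallyEq_set.2
    filter_upwards [hXe, hTae] with ω h1 h2
    have hs : ∀ m : ℕ, ∑ i ∈ Finset.range m, T i ω = S m ω := fun m =>
      Finset.sum_congr rfl fun i _ => h2 i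
    simp only [hBdef, hB'def, Set.mem_setOf_eq, hs, h1]
  have hmeaseq : ProbabilityTheory.cond ℙ A = ProbabilityTheory.cond ℙ A' := by
    unfold ProbabilityTheory.cond
    rw [measure_congr hAae, Measure.restrict_congr_set hAae]
  rw [hmeaseq, cond_apply hA'meas]
  have hABae : ((A' ∩ B : Set Ω)) =ᵐ[ℙ] ((A' ∩ B' : Set Ω)) := by
    apply eventuallyEq_set.2
    filter_upwards [eventuallyEq_set.1 hBae] with ω h
    simp [Set.mem_inter_iff, h]
  rw [measure_congr hABae]
  have hBsubA : ∀ᵐ ω ∂ℙ, ω ∈ B' → ω ∈ A' := by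
    filter_upwards [hpos] with ω hω h
    have h1 : S 1 ω ≤ S k ω :=
      Finset.sum_le_sum_of_subset_of_nonneg (Finset.range_subset_range.2 hk)
        (fun i _ _ => (hω i).le)
    exact lt_of_le_of_lt h1 h.1
  have hAB' : ((A' ∩ B' : Set Ω)) =ᵐ[ℙ] B' := by
    apply eventuallyEq_set.2
    filter_upwards [hBsubA] with ω h
    simp only [Set.mem_inter_iff]
    exact ⟨fun hh => hh.2, fun hh => ⟨h hh, hh⟩⟩
  rw [measure_congr hAB']
  -- ℙ B' = (1/2)^(k+1)
  set C : Set Ω := {ω | S (k+1) ω ≤ X' ω} with hCdef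
  have hCm : MeasurableSet C := measurableSet_le (hSm (k+1)) hX'm
  set A2 : Set Ω := {ω | S k ω < X' ω} with hA2def
  have hB'eq : B' = A2 \ C := by
    ext ω
    simp only [hB'def, hA2def, hCdef, Set.mem_diff, Set.mem_setOf_eq, not_le]
  have hACae : ((A2 ∩ C : Set Ω)) =ᵐ[ℙ] C := by
    apply eventuallyEq_set.2
    filter_upwards [hpos] with ω hω
    simp only [Set.mem_inter_iff, hA2def, hCdef, Set.mem_setOf_eq]
    refine ⟨fun hh => hh.2, fun hh => ⟨?_, hh⟩⟩
    have h1 : S k ω < S (k+1) ω := by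
      have := hω k
      simp only [hSdef]
      rw [Finset.sum_range_succ]
      linarith
    exact lt_of_lt_of_le h1 hh
  have hsum := measure_inter_add_diff (μ := ℙ) A2 hCm
  rw [measure_congr hACae, ← hB'eq] at hsum
  have hC_val : ℙ C = (1/2 : ℝ≥0∞) ^ (k+1) := (hProb (k+1)).2
  have hA2_val : ℙ A2 = (1/2 : ℝ≥0∞) ^ k := (hProb k).1
  rw [hC_val, hA2_val] at hsum
  have hkk : ((1:ℝ≥0∞)/2)^k = (1/2)^(k+1) + (1/2)^(k+1) := by
    rw [pow_succ, ← mul_add, ENNReal.add_halves, mul_one]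
  rw [hkk] at hsum
  have hfin : ((1:ℝ≥0∞)/2)^(k+1) ≠ ⊤ :=
    ENNReal.pow_ne_top (by simp [ENNReal.div_eq_inv_mul])
  have hB'val : ℙ B' = (1/2 : ℝ≥0∞) ^ (k+1) := (ENNReal.add_right_inj hfin).1 hsum
  have hA'val : ℙ A' = (1/2 : ℝ≥0∞) := by
    have := (hProb 1).1
    rwa [pow_one] at this
  rw [hB'val, hA'val, pow_succ, mul_comm ((1/2:ℝ≥0∞)^k) (1/2), ← mul_assoc,
    ENNReal.inv_mul_cancel (by norm_num) (by simp [ENNReal.div_eq_inv_mul]), one_mul]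
end

section
/- Let λ > 0, let (T_i)_{i≥1} be i.i.d. exponential random variables with rate λ, let S_k = T_1 + ... + T_k, and let X be an exponential random variable with rate λ independent of the sequence (T_i). Let N = #{k ≥ 1 : S_k < X} be the number of indices k with S_k < X. Then the conditional expectation E[N | N ≥ 1] = 2; equivalently, the conditional expected number of redundant receptions E[N − 1 | N ≥ 1] = 1. (Theorem 1, Duplication Analysis: under the RMPR protocol, any packet received by a destination node is expected to be received two times on average.) -/
open MeasureTheory ProbabilityTheory Real Filter Topology
open scoped ENNReal

lemma RMPR.iIndepFun_ae_eq {Ω : Type*} [MeasureSpace Ω] {ι : Type*} {f g : ι → Ω → ℝ}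
    (h : iIndepFun f ℙ)
    (hfg : ∀ i, f i =ᵐ[ℙ] g i) :
    iIndepFun g ℙ := by
  rw [iIndepFun_iff_measure_inter_preimage_eq_mul] at h ⊢
  intro S sets hsets
  have hpre : ∀ i : ι, f i ⁻¹' sets i =ᵐ[ℙ] g i ⁻¹' sets i := by
    intro i
    filter_upwards [hfg i] with ω hω
    show (f i ω ∈ sets i) = (g i ω ∈ sets i)
    rw [hω]
  have h1 : (⋂ i ∈ S, f i ⁻¹' sets i) =ᵐ[ℙ] (⋂ i ∈ S, g i ⁻¹' sets i) := by
    rw [Filter.eventuallyEq_set]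
    filter_upwards [(Filter.eventually_all_finset S).2 fun i _ => hfg i] with ω hω
    simp only [Set.mem_iInter, Set.mem_preimage]
    exact ⟨fun H i hi => (hω i hi) ▸ H i hi, fun H i hi => (hω i hi) ▸ H i hi⟩
  calc ℙ (⋂ i ∈ S, g i ⁻¹' sets i) = ℙ (⋂ i ∈ S, f i ⁻¹' sets i) := (measure_congr h1).symm
    _ = ∏ i ∈ S, ℙ (f i ⁻¹' sets i) := h S hsets
    _ = ∏ i ∈ S, ℙ (g i ⁻¹' sets i) := Finset.prod_congr rfl fun i _ => measure_congr (hpre i)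

lemma RMPR.iIndepFun_comp_some {Ω : Type*} [MeasureSpace Ω] {f : Option ℕ → Ω → ℝ}
    (h : iIndepFun f ℙ) :
    iIndepFun (fun i => f (some i)) ℙ := by
  rw [iIndepFun_iff_measure_inter_preimage_eq_mul] at h ⊢
  intro S sets hsets
  classical
  set sets' : Option ℕ → Set ℝ := fun o => o.elim Set.univ sets with hsets'def
  have H' : ∀ o ∈ S.image some, MeasurableSet (sets' o) := by
    intro o ho
    rcases Finset.mem_image.1 ho with ⟨i, hi, rfl⟩
    exact hsets i hi
  have key := h (S.image some) H'
  have h1 : (⋂ o ∈ S.image some, f o ⁻¹' sets' o) = ⋂ i ∈ S, f (some i) ⁻¹' sets i := by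
    ext ω
    simp only [Set.mem_iInter, Set.mem_preimage, Finset.mem_image]
    constructor
    · intro H i hi; exact H (some i) ⟨i, hi, rfl⟩
    · rintro H o ⟨i, hi, rfl⟩; exact H i hi
  have h2 : ∏ o ∈ S.image some, ℙ (f o ⁻¹' sets' o) = ∏ i ∈ S, ℙ (f (some i) ⁻¹' sets i) :=
    Finset.prod_image (fun i _ j _ h => Option.some_injective _ h)
  rw [h1, h2] at key
  exact key

lemma RMPR.expMeasure_Iio_zero {r : ℝ} : expMeasure r (Set.Iio 0) = 0 := by
  rw [expMeasure, gammaMeasure, withDensity_apply _ measurableSet_Iio]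
  exact lintegral_gammaPDF_of_nonpos le_rfl

lemma RMPR.expMeasure_Ioi {r : ℝ} (hr : 0 < r) {x : ℝ} (hx : 0 ≤ x) :
    expMeasure r (Set.Ioi x) = ENNReal.ofReal (Real.exp (-(r * x))) := by
  haveI : IsProbabilityMeasure (expMeasure r) := isProbabilityMeasure_expMeasure hr
  have hle : Real.exp (-(r * x)) ≤ 1 := by
    rw [Real.exp_le_one_iff]
    nlinarith
  have h1 : expMeasure r (Set.Iic x) = ENNReal.ofReal (1 - Real.exp (-(r * x))) := by
    rw [← ofReal_cdf]
    rw [cdf_expMeasure_eq hr, if_pos hx]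
  have h2 : (Set.Ioi x) = (Set.Iic x)ᶜ := by simp
  rw [h2, measure_compl measurableSet_Iic (measure_ne_top _ _), h1, measure_univ]
  rw [← ENNReal.ofReal_one, ← ENNReal.ofReal_sub _ (by linarith)]
  norm_num

lemma RMPR.lintegral_exp_neg_expMeasure {r : ℝ} (hr : 0 < r) :
    ∫⁻ x, ENNReal.ofReal (Real.exp (-(r * x))) ∂(expMeasure r) = ENNReal.ofReal 2⁻¹ := by
  have hpdf : Measurable (exponentialPDF r) :=
    (measurable_exponentialPDFReal r).ennreal_ofReal
  have hg : Measurable (fun x => ENNReal.ofReal (Real.exp (-(r * x)))) := by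
    apply Measurable.ennreal_ofReal
    exact (measurable_const.mul measurable_id).neg.exp
  have hmeq : expMeasure r = MeasureTheory.Measure.withDensity volume (exponentialPDF r) := rfl
  rw [hmeq, lintegral_withDensity_eq_lintegral_mul volume hpdf hg]
  have hpt : ∀ x : ℝ, (exponentialPDF r * fun x => ENNReal.ofReal (Real.exp (-(r * x)))) x
      = ENNReal.ofReal 2⁻¹ * exponentialPDF (2 * r) x := by
    intro x
    simp only [Pi.mul_apply, exponentialPDF_eq]
    rw [← ENNReal.ofReal_mul (by positivity), ← ENNReal.ofReal_mul (by positivity)]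
    congr 1
    split_ifs with h
    · rw [mul_assoc, ← Real.exp_add]
      ring_nf
    · simp
  have hpdf2 : Measurable (exponentialPDF (2 * r)) :=
    (measurable_exponentialPDFReal (2 * r)).ennreal_ofReal
  rw [lintegral_congr hpt, lintegral_const_mul _ hpdf2,
    lintegral_exponentialPDF_eq_one (by linarith), mul_one]

lemma RMPR.mgf_exp {Ω : Type*} [MeasureSpace Ω] {r : ℝ} (hr : 0 < r) {Y : Ω → ℝ}
    (hYm : Measurable Y) (hY : Measure.map Y ℙ = expMeasure r) :
    mgf Y ℙ (-r) = 2⁻¹ := by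
  have hcont : Continuous (fun x : ℝ => Real.exp (-(r * x))) := by
    exact (continuous_const.mul continuous_id).neg.rexp
  rw [mgf]
  have h1 : ∫ ω, Real.exp (-r * Y ω) ∂ℙ = ∫ x, Real.exp (-r * x) ∂(Measure.map Y ℙ) := by
    rw [integral_map hYm.aemeasurable]
    exact ((continuous_const.mul continuous_id).rexp).aestronglyMeasurable
  rw [h1, hY]
  simp only [neg_mul]
  rw [integral_eq_lintegral_of_nonneg_ae (ae_of_all _ fun x => (Real.exp_pos _).le)
    hcont.aestronglyMeasurable, RMPR.lintegral_exp_neg_expMeasure hr,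
    ENNReal.toReal_ofReal (by norm_num)]

lemma RMPR.prob_sum_lt {Ω : Type*} [MeasureSpace Ω] [IsProbabilityMeasure (ℙ : Measure Ω)]
    {r : ℝ} (hr : 0 < r) {F : Option ℕ → Ω → ℝ}
    (hFm : ∀ o, Measurable (F o))
    (hmap : ∀ o, Measure.map (F o) ℙ = expMeasure r)
    (hind : iIndepFun F ℙ) (k : ℕ) :
    ℙ {ω | (∑ i ∈ Finset.range k, F (some i) ω) < F none ω}
      = ENNReal.ofReal ((2 : ℝ)⁻¹ ^ k) := by
  classical
  haveI : IsProbabilityMeasure (expMeasure r) := isProbabilityMeasure_expMeasure hr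
  set S : Ω → ℝ := fun ω => ∑ i ∈ Finset.range k, F (some i) ω with hSdef
  have hSm : Measurable S := by
    apply Finset.measurable_sum
    exact fun i _ => hFm (some i)
  -- nonnegativity a.e. of each T
  have hTnn : ∀ o : Option ℕ, ∀ᵐ ω ∂ℙ, 0 ≤ F o ω := by
    intro o
    have : ℙ (F o ⁻¹' Set.Iio 0) = 0 := by
      rw [← Measure.map_apply (hFm o) measurableSet_Iio, hmap o, RMPR.expMeasure_Iio_zero]
    filter_upwards [measure_eq_zero_iff_ae_notMem.1 this] with ω hω
    simpa [Set.mem_preimage] using hω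
  have hSnn : ∀ᵐ ω ∂ℙ, 0 ≤ S ω := by
    have := (ae_all_iff).2 fun i : ℕ => hTnn (some i)
    filter_upwards [this] with ω hω
    exact Finset.sum_nonneg fun i _ => hω i
  -- independence of S and F none
  have hindSX : IndepFun S (F none) ℙ := by
    have h0 : (none : Option ℕ) ∉ (Finset.range k).image some := by simp
    have := hind.indepFun_finsetSum_of_notMem hFm h0
    have hsum : (∑ o ∈ (Finset.range k).image some, F o) = S := by
      rw [Finset.sum_image (fun i _ j _ h => Option.some_injective _ h)]
      funext ω
      rw [Finset.sum_apply]
    rwa [hsum] at this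
  -- joint law
  have hjoint : Measure.map (fun ω => (S ω, F none ω)) ℙ
      = (Measure.map S ℙ).prod (Measure.map (F none) ℙ) :=
    (indepFun_iff_map_prod_eq_prod_map_map hSm.aemeasurable
      (hFm none).aemeasurable).1 hindSX
  have hset : MeasurableSet {p : ℝ × ℝ | p.1 < p.2} :=
    measurableSet_lt measurable_fst measurable_snd
  have h1 : ℙ {ω | S ω < F none ω}
      = ((Measure.map S ℙ).prod (expMeasure r)) {p : ℝ × ℝ | p.1 < p.2} := by
    rw [← hmap none, ← hjoint, Measure.map_apply (hSm.prodMk (hFm none)) hset]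
    rfl
  rw [h1, Measure.prod_apply hset]
  have h2 : ∀ x : ℝ, (Prod.mk x ⁻¹' {p : ℝ × ℝ | p.1 < p.2}) = Set.Ioi x := by
    intro x; ext y; simp [Set.mem_preimage]
  simp_rw [h2]
  -- a.e. nonneg wrt map S
  have hmapnn : ∀ᵐ x ∂(Measure.map S ℙ), 0 ≤ x := by
    rw [ae_map_iff hSm.aemeasurable (measurableSet_Ici (a := (0:ℝ)))]
    exact hSnn
  have h3 : ∫⁻ x, expMeasure r (Set.Ioi x) ∂(Measure.map S ℙ)
      = ∫⁻ x, ENNReal.ofReal (Real.exp (-(r * x))) ∂(Measure.map S ℙ) := by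
    apply lintegral_congr_ae
    filter_upwards [hmapnn] with x hx
    rw [RMPR.expMeasure_Ioi hr hx]
  have hgm : Measurable (fun x : ℝ => ENNReal.ofReal (Real.exp (-(r * x)))) :=
    ((measurable_const.mul measurable_id).neg.exp).ennreal_ofReal
  rw [h3, lintegral_map hgm hSm]
  -- integrability and nonneg
  have hint : Integrable (fun ω => Real.exp (-(r * S ω))) ℙ := by
    refine Integrable.mono' (integrable_const 1) ((hSm.const_mul r).neg.exp).aestronglyMeasurable ?_
    filter_upwards [hSnn] with ω hω
    rw [Real.norm_eq_abs, abs_of_pos (Real.exp_pos _), Real.exp_le_one_iff]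
    nlinarith
  rw [← ofReal_integral_eq_lintegral_ofReal hint (ae_of_all _ fun ω => (Real.exp_pos _).le)]
  congr 1
  -- integral = mgf = product
  have hTind : iIndepFun (fun i => F (some i)) ℙ :=
    RMPR.iIndepFun_comp_some hind
  have hmgf : mgf S ℙ (-r) = 2⁻¹ ^ k := by
    have hsum2 : S = ∑ i ∈ Finset.range k, (fun ω => F (some i) ω) := by
      ext ω; rw [Finset.sum_apply]
    rw [hsum2, hTind.mgf_sum (fun i => hFm (some i)) (Finset.range k)]
    rw [Finset.prod_congr rfl fun i _ => RMPR.mgf_exp hr (hFm (some i)) (hmap (some i))]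
    simp
  have heq : ∫ ω, Real.exp (-(r * S ω)) ∂ℙ = mgf S ℙ (-r) := by
    simp only [mgf, neg_mul]
  rw [heq, hmgf]

/-- **Theorem 1 (Duplication Analysis).**
Let `λ > 0`, let `(T_i)` be i.i.d. exponential random variables with rate `λ`,
let `S_k = T_1 + ... + T_k` (here `S k = ∑ i ∈ Finset.range k, T i`), and let `X` be an
exponential random variable with rate `λ`, independent of the sequence `(T_i)`.
Let `N = #{k ≥ 1 : S_k < X}`.  Then the conditional expectation `E[N | N ≥ 1] = 2`
(i.e. `E[N · 1_{N ≥ 1}] = 2 · P(N ≥ 1)`); equivalently, the conditional expected number of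
redundant receptions `E[N − 1 | N ≥ 1] = 1`: under the RMPR protocol, any packet received
by a destination node is expected to be received two times on average. -/
theorem expected_duplication_eq_two
    {Ω : Type*} [MeasureSpace Ω] [IsProbabilityMeasure (ℙ : Measure Ω)]
    (lam : ℝ) (hlam : 0 < lam) (T : ℕ → Ω → ℝ) (X : Ω → ℝ)
    (hT : ∀ i, Measure.map (T i) ℙ = ProbabilityTheory.expMeasure lam)
    (hX : Measure.map X ℙ = ProbabilityTheory.expMeasure lam)
    (hindep : iIndepFun
      (fun o : Option ℕ => o.elim X T) ℙ)
    (N : Ω → ℕ)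
    (hN : ∀ ω, N ω = Set.ncard {k : ℕ | 1 ≤ k ∧ ∑ i ∈ Finset.range k, T i ω < X ω}) :
    (∫ ω in {ω | 1 ≤ N ω}, (N ω : ℝ) ∂ℙ = 2 * (ℙ {ω | 1 ≤ N ω}).toReal) ∧
    (∫ ω in {ω | 1 ≤ N ω}, ((N ω : ℝ) - 1) ∂ℙ = 1 * (ℙ {ω | 1 ≤ N ω}).toReal) := by
  classical
  haveI hprob : IsProbabilityMeasure (expMeasure lam) := isProbabilityMeasure_expMeasure hlam
  -- measurable modifications
  have aem : ∀ o : Option ℕ, AEMeasurable (Option.elim o X T) ℙ := by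
    intro o
    apply aemeasurable_of_map_neZero
    have h : Measure.map (Option.elim o X T) ℙ = expMeasure lam := by
      cases o with
      | none => exact hX
      | some i => exact hT i
    rw [h]
    exact ⟨IsProbabilityMeasure.ne_zero _⟩
  set F : Option ℕ → Ω → ℝ := fun o => (aem o).mk _ with hFdef
  have hFm : ∀ o, Measurable (F o) := fun o => (aem o).measurable_mk
  have hFe : ∀ o, (Option.elim o X T) =ᵐ[ℙ] F o := fun o => (aem o).ae_eq_mk
  have hmap : ∀ o, Measure.map (F o) ℙ = expMeasure lam := by
    intro o
    rw [← Measure.map_congr (hFe o)]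
    cases o with
    | none => exact hX
    | some i => exact hT i
  have hindF : iIndepFun F ℙ :=
    RMPR.iIndepFun_ae_eq hindep hFe
  set Ek : ℕ → Set Ω := fun k => {ω | (∑ i ∈ Finset.range k, F (some i) ω) < F none ω}
    with hEkdef
  have hEk : ∀ k, MeasurableSet (Ek k) := fun k =>
    measurableSet_lt (Finset.measurable_sum _ fun i _ => hFm (some i)) (hFm none)
  have hP : ∀ k, ℙ (Ek k) = ENNReal.ofReal ((2:ℝ)⁻¹ ^ k) :=
    RMPR.prob_sum_lt hlam hFm hmap hindF
  -- a.e. facts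
  have hFnn : ∀ᵐ ω ∂ℙ, ∀ i : ℕ, 0 ≤ F (some i) ω := by
    rw [ae_all_iff]
    intro i
    have h0 : ℙ (F (some i) ⁻¹' Set.Iio 0) = 0 := by
      rw [← Measure.map_apply (hFm (some i)) measurableSet_Iio, hmap (some i),
        RMPR.expMeasure_Iio_zero]
    filter_upwards [measure_eq_zero_iff_ae_notMem.1 h0] with ω hω
    simpa [Set.mem_preimage] using hω
  have hinter : ℙ (⋂ k : ℕ, Ek (k + 1)) = 0 := by
    have hsub : ∀ k : ℕ, ℙ (⋂ j : ℕ, Ek (j + 1)) ≤ ENNReal.ofReal ((2:ℝ)⁻¹ ^ (k+1)) :=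
      fun k => (hP (k+1)) ▸ measure_mono (Set.iInter_subset _ k)
    have htend : Tendsto (fun k : ℕ => ENNReal.ofReal ((2:ℝ)⁻¹ ^ (k+1))) atTop (𝓝 0) := by
      have h1 : Tendsto (fun k : ℕ => (2:ℝ)⁻¹ ^ (k+1)) atTop (𝓝 0) :=
        (tendsto_pow_atTop_nhds_zero_of_lt_one (by norm_num) (by norm_num)).comp
          (tendsto_add_atTop_nat 1)
      have := ENNReal.tendsto_ofReal h1
      simpa using this
    exact le_antisymm (ge_of_tendsto' htend hsub) zero_le
  have hTae : ∀ᵐ ω ∂ℙ, ∀ i : ℕ, T i ω = F (some i) ω := ae_all_iff.2 fun i => hFe (some i)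
  have hXae : ∀ᵐ ω ∂ℙ, X ω = F none ω := hFe none
  have hninter : ∀ᵐ ω ∂ℙ, ω ∉ ⋂ k : ℕ, Ek (k + 1) := measure_eq_zero_iff_ae_notMem.1 hinter
  -- the key pointwise characterization
  have hchar : ∀ᵐ ω ∂ℙ, ∀ k : ℕ, (ω ∈ Ek (k+1) ↔ k + 1 ≤ N ω) := by
    filter_upwards [hFnn, hTae, hXae, hninter] with ω hnn hTeq hXeq hnot
    have hmono : ∀ {a b : ℕ}, a ≤ b →
        (∑ i ∈ Finset.range a, F (some i) ω) ≤ ∑ i ∈ Finset.range b, F (some i) ω := by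
      intro a b hab
      exact Finset.sum_le_sum_of_subset_of_nonneg (Finset.range_subset_range.2 hab)
        (fun i _ _ => hnn i)
    have hex : ∃ k : ℕ, ¬ (ω ∈ Ek (k+1)) := by
      by_contra h
      push_neg at h
      exact hnot (Set.mem_iInter.2 h)
    set m := Nat.find hex with hm
    have hiff : ∀ k : ℕ, (ω ∈ Ek (k+1)) ↔ k < m := by
      intro k
      constructor
      · intro h
        by_contra hk
        push_neg at hk
        have h1 : ¬ (ω ∈ Ek (m+1)) := Nat.find_spec hex
        have h2 : (∑ i ∈ Finset.range (m+1), F (some i) ω)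
            ≤ ∑ i ∈ Finset.range (k+1), F (some i) ω := hmono (by omega)
        exact h1 (lt_of_le_of_lt h2 h)
      · intro hk
        have := Nat.find_min hex hk
        simpa using this
    have hA : {j : ℕ | 1 ≤ j ∧ ∑ i ∈ Finset.range j, T i ω < X ω} = Set.Icc 1 m := by
      ext j
      simp only [Set.mem_setOf_eq, Set.mem_Icc]
      have hsum : ∀ j : ℕ, (∑ i ∈ Finset.range j, T i ω) = ∑ i ∈ Finset.range j, F (some i) ω :=
        fun j => Finset.sum_congr rfl fun i _ => hTeq i
      rw [hsum, hXeq]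
      cases j with
      | zero => simp
      | succ k =>
        have : ((∑ i ∈ Finset.range (k+1), F (some i) ω) < F none ω) ↔ k < m := hiff k
        constructor
        · rintro ⟨-, h⟩
          have h2 := this.1 h
          exact ⟨by omega, by omega⟩
        · rintro ⟨-, h⟩
          exact ⟨by omega, this.2 (by omega)⟩
    have hNω : N ω = m := by
      rw [hN ω, hA, ← Finset.coe_Icc, Set.ncard_coe_finset, Nat.card_Icc]
      omega
    intro k
    rw [hNω, hiff k]
    omega
  -- the counting function in ℝ≥0∞
  set M : Ω → ℝ≥0∞ := fun ω => ∑' k : ℕ, (Ek (k+1)).indicator (fun _ => (1:ℝ≥0∞)) ω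
    with hMdef
  have hMeas : Measurable M :=
    Measurable.ennreal_tsum fun k => measurable_const.indicator (hEk (k+1))
  have hNM : ∀ᵐ ω ∂ℙ, (N ω : ℝ≥0∞) = M ω := by
    filter_upwards [hchar] with ω hω
    have h1 : ∀ k : ℕ, (Ek (k+1)).indicator (fun _ => (1:ℝ≥0∞)) ω
        = if k < N ω then 1 else 0 := by
      intro k
      rw [Set.indicator_apply]
      congr 1
      simp only [eq_iff_iff]
      rw [hω k]
      omega
    rw [hMdef]
    simp only []
    rw [tsum_congr h1, tsum_eq_sum (s := Finset.range (N ω))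
      (fun k hk => if_neg (by simpa using hk))]
    rw [Finset.sum_congr rfl (fun k hk => if_pos (Finset.mem_range.1 hk))]
    simp
  have hlint : ∫⁻ ω, (N ω : ℝ≥0∞) ∂ℙ = 1 := by
    rw [lintegral_congr_ae hNM, hMdef]
    rw [lintegral_tsum fun k => (measurable_const.indicator (hEk (k+1))).aemeasurable]
    have h2 : ∀ k : ℕ, ∫⁻ ω, (Ek (k+1)).indicator (fun _ => (1:ℝ≥0∞)) ω ∂ℙ
        = ENNReal.ofReal ((2:ℝ)⁻¹ ^ (k+1)) := by
      intro k
      rw [lintegral_indicator (hEk (k+1)), setLIntegral_one, hP (k+1)]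
    rw [tsum_congr h2]
    have h3 : ∀ k : ℕ, ENNReal.ofReal ((2:ℝ)⁻¹ ^ (k+1)) = (2:ℝ≥0∞)⁻¹ ^ (k+1) := by
      intro k
      rw [ENNReal.ofReal_pow (by norm_num)]
      congr 1
      rw [ENNReal.ofReal_inv_of_pos (by norm_num)]
      norm_num
    rw [tsum_congr h3]
    simp_rw [pow_succ']
    rw [ENNReal.tsum_mul_left, ENNReal.tsum_geometric, ENNReal.one_sub_inv_two, inv_inv,
      ENNReal.inv_mul_cancel (by norm_num) (by norm_num)]
  have hNae : (fun ω => (N ω : ℝ)) =ᵐ[ℙ] fun ω => (M ω).toReal := by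
    filter_upwards [hNM] with ω hω
    rw [← hω]
    simp
  have hInt : Integrable (fun ω => (N ω : ℝ)) ℙ := by
    have hMint : Integrable (fun ω => (M ω).toReal) ℙ := by
      apply integrable_toReal_of_lintegral_ne_top hMeas.aemeasurable
      rw [← lintegral_congr_ae hNM, hlint]
      exact ENNReal.one_ne_top
    exact hMint.congr hNae.symm
  have hIntegral : ∫ ω, (N ω : ℝ) ∂ℙ = 1 := by
    rw [integral_eq_lintegral_of_nonneg_ae (ae_of_all _ fun ω => Nat.cast_nonneg _)
      hInt.aestronglyMeasurable]
    simp_rw [ENNReal.ofReal_natCast]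
    rw [hlint]
    simp
  have hsetae : {ω | 1 ≤ N ω} =ᵐ[ℙ] Ek 1 := by
    rw [Filter.eventuallyEq_set]
    filter_upwards [hchar] with ω hω
    exact (hω 0).symm
  have hPone : ℙ {ω | 1 ≤ N ω} = ENNReal.ofReal 2⁻¹ := by
    rw [measure_congr hsetae, hP 1, pow_one]
  have htoReal : (ℙ {ω | 1 ≤ N ω}).toReal = 2⁻¹ := by
    rw [hPone, ENNReal.toReal_ofReal (by norm_num)]
  have hrestrict : (ℙ : Measure Ω).restrict {ω | 1 ≤ N ω} = (ℙ : Measure Ω).restrict (Ek 1) :=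
    Measure.restrict_congr_set hsetae
  have hindic : (Ek 1).indicator (fun ω => (N ω : ℝ)) =ᵐ[ℙ] fun ω => (N ω : ℝ) := by
    filter_upwards [Filter.eventuallyEq_set.1 hsetae] with ω hω
    by_cases h : ω ∈ Ek 1
    · rw [Set.indicator_of_mem h]
    · rw [Set.indicator_of_notMem h]
      have h1 : ¬ (1 ≤ N ω) := fun hh => h (hω.1 hh)
      have h2 : N ω = 0 := by omega
      simp [h2]
  have hsetint : ∫ ω in Ek 1, (N ω : ℝ) ∂ℙ = 1 := by
    rw [← integral_indicator (hEk 1), integral_congr_ae hindic, hIntegral]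
  constructor
  · rw [show (∫ ω in {ω | 1 ≤ N ω}, (N ω : ℝ) ∂ℙ) = ∫ ω in Ek 1, (N ω : ℝ) ∂ℙ from by
      rw [hrestrict], hsetint, htoReal]
    norm_num
  · rw [show (∫ ω in {ω | 1 ≤ N ω}, ((N ω : ℝ) - 1) ∂ℙ)
        = ∫ ω in Ek 1, ((N ω : ℝ) - 1) ∂ℙ from by rw [hrestrict]]
    rw [integral_sub (hInt.restrict) (integrable_const 1), hsetint, setIntegral_const,
      htoReal, measureReal_def, hP 1, pow_one, ENNReal.toReal_ofReal (by norm_num)]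
    norm_num
end
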